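/- Let $s > 0$ and $X > e$. Then $\int_X^\infty \frac{dY}{Y^{s}\,(\log Y)\,(Y^2 - X^2)^{1/2}} = \frac{\sqrt{\pi}\,\Gamma(s/2)}{2\,\Gamma((s+1)/2)}\,\frac{1}{X^{s}\log X}\left(1 + O\left(\frac{1}{\log X}\right)\right)$ as $X \to \infty$. -/

import Mathlib

open MeasureTheory Real Set

lemma realBeta (a b : ℝ) (ha : 0 < a) (hb : 0 < b) :
    IntegrableOn (fun t : ℝ => t ^ (a - 1) * (1 - t) ^ (b - 1)) (Ioo 0 1) ∧
      ∫ t in Ioo (0:ℝ) 1, t ^ (a - 1) * (1 - t) ^ (b - 1) =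
        Real.Gamma a * Real.Gamma b / Real.Gamma (a + b) := by
  set F : ℝ → ℂ := fun x => (x : ℂ) ^ ((a : ℂ) - 1) * (1 - (x : ℂ)) ^ ((b : ℂ) - 1) with hFdef
  have ha' : 0 < (a : ℂ).re := by simpa using ha
  have hb' : 0 < (b : ℂ).re := by simpa using hb
  have hF : IntervalIntegrable F volume 0 1 := Complex.betaIntegral_convergent ha' hb'
  have hFIoc : IntegrableOn F (Ioc 0 1) := by
    rwa [intervalIntegrable_iff_integrableOn_Ioc_of_le zero_le_one] at hF
  have hEq : ∀ x ∈ Ioo (0:ℝ) 1, ((x ^ (a-1) * (1-x) ^ (b-1) : ℝ) : ℂ) = F x := by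
    intro x hx
    rw [Complex.ofReal_mul, Complex.ofReal_cpow hx.1.le, Complex.ofReal_cpow (by linarith [hx.2])]
    push_cast
    ring
  constructor
  · have : IntegrableOn (fun x => (F x).re) (Ioo 0 1) :=
      (hFIoc.mono_set Ioo_subset_Ioc_self).re
    refine this.congr_fun ?_ measurableSet_Ioo
    intro x hx
    simp only
    rw [← hEq x hx, Complex.ofReal_re]
  · have hbeta : Complex.betaIntegral a b =
        ((∫ t in Ioo (0:ℝ) 1, t ^ (a-1) * (1-t) ^ (b-1)) : ℝ) := by
      rw [Complex.betaIntegral, intervalIntegral.integral_of_le zero_le_one,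
        integral_Ioc_eq_integral_Ioo]
      rw [show (∫ (t : ℝ) in Ioo 0 1, (t:ℂ) ^ ((a:ℂ) - 1) * (1 - (t:ℂ)) ^ ((b:ℂ) - 1) ∂volume)
          = ∫ t in Ioo (0:ℝ) 1, ((t ^ (a-1) * (1-t) ^ (b-1) : ℝ) : ℂ) from
        (setIntegral_congr_fun measurableSet_Ioo hEq).symm]
      exact integral_ofReal
    have hg := Complex.Gamma_mul_Gamma_eq_betaIntegral ha' hb'
    rw [hbeta, Complex.Gamma_ofReal, Complex.Gamma_ofReal, ← Complex.ofReal_add,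
      Complex.Gamma_ofReal, ← Complex.ofReal_mul, ← Complex.ofReal_mul,
      Complex.ofReal_inj] at hg
    have hG : Real.Gamma (a + b) ≠ 0 := (Real.Gamma_pos_of_pos (by linarith)).ne'
    field_simp [hg]
    rw [hg]; ring

lemma phi_facts :
    ((fun t : ℝ => t ^ (-(2⁻¹:ℝ))) '' Ioo 0 1 = Ioi 1) ∧
    (∀ t ∈ Ioo (0:ℝ) 1, HasDerivWithinAt (fun t : ℝ => t ^ (-(2⁻¹:ℝ)))
      ((-(2⁻¹:ℝ)) * t ^ (-(2⁻¹:ℝ) - 1)) (Ioo 0 1) t) ∧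
    InjOn (fun t : ℝ => t ^ (-(2⁻¹:ℝ))) (Ioo 0 1) := by
  refine ⟨?_, ?_, ?_⟩
  · ext y
    simp only [mem_image, mem_Ioi, mem_Ioo]
    constructor
    · rintro ⟨t, ⟨ht0, ht1⟩, rfl⟩
      rw [Real.one_lt_rpow_iff_of_pos ht0]
      right; exact ⟨ht1, by norm_num⟩
    · intro hy
      have hy0 : (0:ℝ) < y := lt_trans one_pos hy
      refine ⟨y ^ (-2:ℝ), ⟨Real.rpow_pos_of_pos hy0 _,
        Real.rpow_lt_one_of_one_lt_of_neg hy (by norm_num)⟩, ?_⟩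
      rw [← Real.rpow_mul hy0.le]
      norm_num
  · intro t ht
    exact (Real.hasDerivAt_rpow_const (Or.inl ht.1.ne')).hasDerivWithinAt
  · intro x hx y hy h
    have h2 := congrArg (fun z : ℝ => z ^ (-2:ℝ)) h
    simp only [← Real.rpow_mul hx.1.le, ← Real.rpow_mul hy.1.le] at h2
    norm_num at h2
    exact h2

lemma subst_lemma (g : ℝ → ℝ) :
    (∫ u in Ioi (1:ℝ), g u =
      ∫ t in Ioo (0:ℝ) 1, |(-(2⁻¹:ℝ)) * t ^ (-(2⁻¹:ℝ) - 1)| • g (t ^ (-(2⁻¹:ℝ)))) ∧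
    (IntegrableOn g (Ioi 1) ↔
      IntegrableOn (fun t => |(-(2⁻¹:ℝ)) * t ^ (-(2⁻¹:ℝ) - 1)| • g (t ^ (-(2⁻¹:ℝ)))) (Ioo 0 1)) := by
  obtain ⟨himg, hderiv, hinj⟩ := phi_facts
  constructor
  · rw [← himg]
    exact integral_image_eq_integral_abs_deriv_smul measurableSet_Ioo hderiv hinj g
  · rw [← himg]
    exact integrableOn_image_iff_integrableOn_abs_deriv_smul measurableSet_Ioo hderiv hinj g

lemma key_ptwise (s t : ℝ) (ht : t ∈ Ioo (0:ℝ) 1) :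
    |(-(2⁻¹:ℝ)) * t ^ (-(2⁻¹:ℝ) - 1)| •
      ((t ^ (-(2⁻¹:ℝ))) ^ (-s) * (Real.sqrt ((t ^ (-(2⁻¹:ℝ)))^2 - 1))⁻¹)
      = 2⁻¹ * (t ^ (s/2 - 1) * (1-t) ^ ((1:ℝ)/2 - 1)) := by
  obtain ⟨ht0, ht1⟩ := ht
  have hts : (0:ℝ) < 1 - t := by linarith
  have h2 : ((t : ℝ) ^ (-(2⁻¹:ℝ)))^2 - 1 = (1 - t)/t := by
    rw [← Real.rpow_natCast (t ^ (-(2⁻¹:ℝ))) 2, ← Real.rpow_mul ht0.le]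
    norm_num
    rw [Real.rpow_neg_one]
    field_simp
  have habs : |(-(2⁻¹:ℝ)) * t ^ (-(2⁻¹:ℝ) - 1)| = 2⁻¹ * t ^ (-(2⁻¹:ℝ) - 1) := by
    rw [abs_mul, abs_neg, abs_of_nonneg (Real.rpow_nonneg ht0.le _)]
    norm_num
  have hp : (t ^ (-(2⁻¹:ℝ))) ^ (-s) = t ^ (2⁻¹ * s) := by
    rw [← Real.rpow_mul ht0.le]
    congr 1; ring
  have e1 : Real.sqrt t = t ^ (2⁻¹:ℝ) := by rw [Real.sqrt_eq_rpow]; norm_num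
  have e2 : Real.sqrt (1-t) = (1-t) ^ (2⁻¹:ℝ) := by rw [Real.sqrt_eq_rpow]; norm_num
  have e3 : ((1-t:ℝ)) ^ ((1:ℝ)/2 - 1) = ((1-t) ^ (2⁻¹:ℝ))⁻¹ := by
    rw [show (1:ℝ)/2 - 1 = -(2⁻¹) by norm_num, Real.rpow_neg hts.le]
  have e4 : t ^ (s/2 - 1) = t ^ (-(2⁻¹:ℝ) - 1) * t ^ (2⁻¹ * s) * t ^ (2⁻¹:ℝ) := by
    rw [← Real.rpow_add ht0, ← Real.rpow_add ht0]
    congr 1; ring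
  have ht2 : ((1-t:ℝ)) ^ (2⁻¹:ℝ) ≠ 0 := (Real.rpow_pos_of_pos hts _).ne'
  rw [smul_eq_mul, habs, hp, h2, Real.sqrt_div hts.le, e1, e2, e3, e4, inv_div]
  field_simp

lemma intA (s : ℝ) (hs : 0 < s) :
    IntegrableOn (fun u : ℝ => u ^ (-s) * (Real.sqrt (u^2 - 1))⁻¹) (Ioi 1) ∧
    ∫ u in Ioi (1:ℝ), u ^ (-s) * (Real.sqrt (u^2 - 1))⁻¹ =
      Real.sqrt Real.pi * Real.Gamma (s/2) / (2 * Real.Gamma ((s+1)/2)) := by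
  obtain ⟨hint, hval⟩ := realBeta (s/2) (1/2) (by linarith) (by norm_num)
  obtain ⟨heq, hiff⟩ := subst_lemma (fun u => u ^ (-s) * (Real.sqrt (u^2 - 1))⁻¹)
  constructor
  · rw [hiff]
    exact IntegrableOn.congr_fun (hint.const_mul 2⁻¹) (fun t ht => (key_ptwise s t ht).symm) measurableSet_Ioo
  · rw [heq, setIntegral_congr_fun measurableSet_Ioo (fun t ht => key_ptwise s t ht),
      MeasureTheory.integral_const_mul, hval, Real.Gamma_one_half_eq,
      show s/2 + 1/2 = (s+1)/2 by ring]
    ring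

lemma contB (s : ℝ) :
    ContinuousOn (fun u : ℝ => u ^ (-s) * (Real.sqrt (u^2 - 1))⁻¹ * Real.log u) (Ioi 1) := by
  have h1 : ContinuousOn (fun u : ℝ => u ^ (-s)) (Ioi 1) :=
    ContinuousOn.rpow_const continuousOn_id
      (fun x hx => Or.inl (by have : (1:ℝ) < x := hx; positivity))
  have h2 : ContinuousOn (fun u : ℝ => (Real.sqrt (u^2 - 1))⁻¹) (Ioi 1) := by
    refine ContinuousOn.inv₀
      ((Real.continuous_sqrt.comp ((continuous_pow 2).sub continuous_const)).continuousOn) ?_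
    intro x hx
    have : (1:ℝ) < x := hx
    exact (Real.sqrt_pos.mpr (by nlinarith)).ne'
  have h3 : ContinuousOn (fun u : ℝ => Real.log u) (Ioi 1) :=
    ContinuousOn.log continuousOn_id (fun x hx => by have : (1:ℝ) < x := hx; positivity)
  exact (h1.mul h2).mul h3

lemma intB (s : ℝ) (hs : 0 < s) :
    IntegrableOn (fun u : ℝ => u ^ (-s) * (Real.sqrt (u^2 - 1))⁻¹ * Real.log u) (Ioi 1) := by
  obtain ⟨hintD, -⟩ := realBeta (s/4) (1/2) (by linarith) (by norm_num)
  obtain ⟨-, hiff⟩ := subst_lemma (fun u => u ^ (-s) * (Real.sqrt (u^2 - 1))⁻¹ * Real.log u)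
  rw [hiff]
  have himg := phi_facts.1
  refine Integrable.mono' (hintD.const_mul (4/s)) ?_ ?_
  · -- a.e. strong measurability via continuity on Ioo 0 1
    refine ContinuousOn.aestronglyMeasurable ?_ measurableSet_Ioo
    have hu : ContinuousOn (fun t : ℝ => t ^ (-(2⁻¹:ℝ))) (Ioo 0 1) :=
      ContinuousOn.rpow_const continuousOn_id (fun x hx => Or.inl hx.1.ne')
    have hmaps : MapsTo (fun t : ℝ => t ^ (-(2⁻¹:ℝ))) (Ioo 0 1) (Ioi 1) := by
      intro t ht
      rw [← himg]
      exact mem_image_of_mem _ ht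
    have hcomp := (contB s).comp hu hmaps
    have habs : ContinuousOn (fun t : ℝ => |(-(2⁻¹:ℝ)) * t ^ (-(2⁻¹:ℝ) - 1)|) (Ioo 0 1) :=
      (ContinuousOn.mul continuousOn_const
        (ContinuousOn.rpow_const continuousOn_id (fun x hx => Or.inl hx.1.ne'))).abs
    exact habs.smul hcomp
  · rw [ae_restrict_iff' measurableSet_Ioo]
    refine ae_of_all _ ?_
    intro t ht
    obtain ⟨ht0, ht1⟩ := ht
    have hts : (0:ℝ) < 1 - t := by linarith
    have hkey := key_ptwise s t ⟨ht0, ht1⟩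
    have hexp : |(-(2⁻¹:ℝ)) * t ^ (-(2⁻¹:ℝ) - 1)| •
        ((t ^ (-(2⁻¹:ℝ))) ^ (-s) * (Real.sqrt ((t ^ (-(2⁻¹:ℝ)))^2 - 1))⁻¹ *
          Real.log (t ^ (-(2⁻¹:ℝ))))
        = (2⁻¹ * (t ^ (s/2 - 1) * (1-t) ^ ((1:ℝ)/2 - 1))) * (2⁻¹ * (-Real.log t)) := by
      rw [smul_eq_mul, ← hkey, smul_eq_mul, Real.log_rpow ht0]
      ring
    have hL : (0:ℝ) ≤ -Real.log t := by
      have := Real.log_nonpos ht0.le ht1.le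
      linarith
    have hLle : -Real.log t ≤ (4/s) * t ^ (-(s/4)) := by
      have h1 : -Real.log t = Real.log t⁻¹ := (Real.log_inv t).symm
      have ht0' : (0:ℝ) < t⁻¹ := by positivity
      have h2 : (s/4) * Real.log t⁻¹ = Real.log ((t⁻¹) ^ (s/4)) := (Real.log_rpow ht0' _).symm
      have h3 : Real.log ((t⁻¹) ^ (s/4)) ≤ (t⁻¹) ^ (s/4) :=
        le_trans (Real.log_le_sub_one_of_pos (Real.rpow_pos_of_pos ht0' _)) (by linarith)
      have h4 : (t⁻¹ : ℝ) ^ (s/4) = t ^ (-(s/4)) := by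
        rw [Real.inv_rpow ht0.le, ← Real.rpow_neg ht0.le]
      rw [h1]
      have h5 : Real.log t⁻¹ ≤ (4/s) * (t⁻¹) ^ (s/4) := by
        rw [show Real.log t⁻¹ = (4/s) * ((s/4) * Real.log t⁻¹) by field_simp]
        have : (0:ℝ) ≤ 4/s := by positivity
        rw [h2]
        exact mul_le_mul_of_nonneg_left h3 this
      rw [← h4]
      exact h5
    have hP : (0:ℝ) ≤ t ^ (s/2 - 1) := Real.rpow_nonneg ht0.le _
    have hQ : (0:ℝ) ≤ (1-t) ^ ((1:ℝ)/2 - 1) := Real.rpow_nonneg hts.le _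
    rw [hexp, Real.norm_eq_abs, abs_of_nonneg (by positivity)]
    have hcomb : t ^ (s/2 - 1) * t ^ (-(s/4)) = t ^ (s/4 - 1) := by
      rw [← Real.rpow_add ht0]
      congr 1; ring
    calc 2⁻¹ * (t ^ (s/2 - 1) * (1-t) ^ ((1:ℝ)/2 - 1)) * (2⁻¹ * (-Real.log t))
        ≤ 2⁻¹ * (t ^ (s/2 - 1) * (1-t) ^ ((1:ℝ)/2 - 1)) * (2⁻¹ * ((4/s) * t ^ (-(s/4)))) := by
          apply mul_le_mul_of_nonneg_left _ (by positivity)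
          apply mul_le_mul_of_nonneg_left hLle (by norm_num)
      _ = (1/s) * (t ^ (s/4 - 1) * (1-t) ^ ((1:ℝ)/2 - 1)) := by
          rw [← hcomb]; ring
      _ ≤ (4/s) * (t ^ (s/4 - 1) * (1-t) ^ ((1:ℝ)/2 - 1)) := by
          apply mul_le_mul_of_nonneg_right _ (by positivity)
          gcongr
          norm_num

theorem stmt5 (s : ℝ) (hs : 0 < s) :
    ∃ C X₀ : ℝ, 0 < C ∧ Real.exp 1 < X₀ ∧ ∀ X : ℝ, X₀ ≤ X →
      |(∫ Y in Set.Ioi X, 1 / (Y ^ s * Real.log Y * Real.sqrt (Y ^ 2 - X ^ 2))) -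
          Real.sqrt Real.pi * Real.Gamma (s / 2) / (2 * Real.Gamma ((s + 1) / 2)) *
            (1 / (X ^ s * Real.log X))| ≤
        C / (X ^ s * (Real.log X) ^ 2) := by
  obtain ⟨hAint, hAval⟩ := intA s hs
  have hBint := intB s hs
  set C₀ : ℝ := ∫ u in Ioi (1:ℝ), u ^ (-s) * (Real.sqrt (u^2 - 1))⁻¹ * Real.log u with hC₀
  have hBnn : ∀ u ∈ Ioi (1:ℝ), 0 ≤ u ^ (-s) * (Real.sqrt (u^2 - 1))⁻¹ * Real.log u := by
    intro u hu
    have hu1 : (1:ℝ) < u := hu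
    have h1 : (0:ℝ) ≤ u ^ (-s) := Real.rpow_nonneg (by linarith) _
    have h2 : (0:ℝ) ≤ (Real.sqrt (u^2 - 1))⁻¹ := by positivity
    have h3 : (0:ℝ) ≤ Real.log u := Real.log_nonneg hu1.le
    positivity
  have hC₀nn : 0 ≤ C₀ := setIntegral_nonneg measurableSet_Ioi hBnn
  refine ⟨C₀ + 1, Real.exp 2, by linarith, Real.exp_lt_exp.mpr one_lt_two, ?_⟩
  intro X hX
  have hX1 : (1:ℝ) < X := by
    calc (1:ℝ) = Real.exp 0 := Real.exp_zero.symm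
      _ < Real.exp 2 := Real.exp_lt_exp.mpr (by norm_num)
      _ ≤ X := hX
  have hX0 : (0:ℝ) < X := by linarith
  have hL2 : (2:ℝ) ≤ Real.log X := by
    have := Real.log_le_log (Real.exp_pos 2) hX
    rwa [Real.log_exp] at this
  have hLpos : (0:ℝ) < Real.log X := by linarith
  have hXs : (0:ℝ) < X ^ s := Real.rpow_pos_of_pos hX0 s
  set f : ℝ → ℝ := fun Y => 1 / (Y ^ s * Real.log Y * Real.sqrt (Y ^ 2 - X ^ 2)) with hf
  -- scaling
  have hcomp := MeasureTheory.integral_comp_mul_left_Ioi f 1 hX0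
  rw [mul_one] at hcomp
  have hI : ∫ Y in Ioi X, f Y = X * (∫ u in Ioi 1, f (X * u)) := by
    rw [hcomp, smul_eq_mul, ← mul_assoc, mul_inv_cancel₀ hX0.ne', one_mul]
  -- pointwise rewrite of f (X * u)
  have hFeq : EqOn (fun u => f (X * u))
      (fun u => ((X ^ s)⁻¹ * X⁻¹) *
        ((Real.log X)⁻¹ * (u ^ (-s) * (Real.sqrt (u^2 - 1))⁻¹) -
         (Real.log X)⁻¹ * ((u ^ (-s) * (Real.sqrt (u^2 - 1))⁻¹ * Real.log u) *
            (Real.log (X * u))⁻¹))) (Ioi 1) := by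
    intro u hu
    have hu1 : (1:ℝ) < u := hu
    have hu0 : (0:ℝ) < u := by linarith
    have hXu : (1:ℝ) < X * u := by nlinarith
    have hlogu : (0:ℝ) ≤ Real.log u := Real.log_nonneg hu1.le
    have hsq : (0:ℝ) < Real.sqrt (u^2 - 1) := Real.sqrt_pos.mpr (by nlinarith)
    have hus : (0:ℝ) < u ^ s := Real.rpow_pos_of_pos hu0 s
    have hpow : (X * u) ^ s = X ^ s * u ^ s := Real.mul_rpow hX0.le hu0.le
    have hsqrt : Real.sqrt ((X * u)^2 - X^2) = X * Real.sqrt (u^2 - 1) := by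
      rw [show (X*u)^2 - X^2 = X^2 * (u^2 - 1) by ring, Real.sqrt_mul (sq_nonneg X),
        Real.sqrt_sq hX0.le]
    have hlogsum : Real.log (X * u) = Real.log X + Real.log u := Real.log_mul hX0.ne' hu0.ne'
    have hLL : (0:ℝ) < Real.log X + Real.log u := by linarith
    simp only [hf]
    rw [hpow, hsqrt, hlogsum, Real.rpow_neg hu0.le]
    field_simp
    ring
  -- integrability of the remainder piece
  have hbound_ptwise : ∀ u ∈ Ioi (1:ℝ),
      ‖(Real.log X)⁻¹ * ((u ^ (-s) * (Real.sqrt (u^2 - 1))⁻¹ * Real.log u) *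
          (Real.log (X * u))⁻¹)‖ ≤
        (Real.log X)⁻¹ * (Real.log X)⁻¹ *
          (u ^ (-s) * (Real.sqrt (u^2 - 1))⁻¹ * Real.log u) := by
    intro u hu
    have hu1 : (1:ℝ) < u := hu
    have hu0 : (0:ℝ) < u := by linarith
    have hXu : X ≤ X * u := by nlinarith
    have hLX : Real.log X ≤ Real.log (X * u) := Real.log_le_log hX0 hXu
    have hLXu : (0:ℝ) < Real.log (X * u) := by linarith
    have hBn : 0 ≤ u ^ (-s) * (Real.sqrt (u^2 - 1))⁻¹ * Real.log u := hBnn u hu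
    have hinv : (Real.log (X * u))⁻¹ ≤ (Real.log X)⁻¹ := by
      exact inv_anti₀ hLpos hLX
    rw [Real.norm_eq_abs, abs_of_nonneg (by positivity)]
    calc (Real.log X)⁻¹ * ((u ^ (-s) * (Real.sqrt (u^2 - 1))⁻¹ * Real.log u) *
            (Real.log (X * u))⁻¹)
        ≤ (Real.log X)⁻¹ * ((u ^ (-s) * (Real.sqrt (u^2 - 1))⁻¹ * Real.log u) *
            (Real.log X)⁻¹) := by
          apply mul_le_mul_of_nonneg_left _ (by positivity)
          exact mul_le_mul_of_nonneg_left hinv hBn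
      _ = (Real.log X)⁻¹ * (Real.log X)⁻¹ *
            (u ^ (-s) * (Real.sqrt (u^2 - 1))⁻¹ * Real.log u) := by ring
  have hbcont : ContinuousOn (fun u : ℝ =>
      (Real.log X)⁻¹ * ((u ^ (-s) * (Real.sqrt (u^2 - 1))⁻¹ * Real.log u) *
        (Real.log (X * u))⁻¹)) (Ioi 1) := by
    have h4 : ContinuousOn (fun u : ℝ => (Real.log (X * u))⁻¹) (Ioi 1) := by
      refine ContinuousOn.inv₀
        (ContinuousOn.log ((continuous_const.mul continuous_id).continuousOn) ?_) ?_
      · intro x hx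
        have : (1:ℝ) < x := hx
        nlinarith
      · intro x hx
        have hx1 : (1:ℝ) < x := hx
        have : (1:ℝ) < X * x := by nlinarith
        exact (Real.log_pos this).ne'
    exact continuousOn_const.mul ((contB s).mul h4)
  have hbint : IntegrableOn (fun u : ℝ =>
      (Real.log X)⁻¹ * ((u ^ (-s) * (Real.sqrt (u^2 - 1))⁻¹ * Real.log u) *
        (Real.log (X * u))⁻¹)) (Ioi 1) := by
    refine Integrable.mono' (hBint.const_mul ((Real.log X)⁻¹ * (Real.log X)⁻¹)) ?_ ?_
    · exact hbcont.aestronglyMeasurable measurableSet_Ioi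
    · rw [ae_restrict_iff' measurableSet_Ioi]
      exact ae_of_all _ hbound_ptwise
  set R : ℝ := ∫ u in Ioi (1:ℝ),
      (Real.log X)⁻¹ * ((u ^ (-s) * (Real.sqrt (u^2 - 1))⁻¹ * Real.log u) *
        (Real.log (X * u))⁻¹) with hR
  have hsplit : ∫ u in Ioi (1:ℝ), f (X * u) =
      ((X ^ s)⁻¹ * X⁻¹) * ((Real.log X)⁻¹ *
        (Real.sqrt Real.pi * Real.Gamma (s / 2) / (2 * Real.Gamma ((s + 1) / 2))) - R) := by
    rw [setIntegral_congr_fun measurableSet_Ioi hFeq, MeasureTheory.integral_const_mul,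
      integral_sub (hAint.const_mul _) hbint, MeasureTheory.integral_const_mul, hAval]
  have hRle : |R| ≤ (Real.log X)⁻¹ * (Real.log X)⁻¹ * C₀ := by
    have h1 := norm_integral_le_of_norm_le
      (hBint.const_mul ((Real.log X)⁻¹ * (Real.log X)⁻¹))
      ((ae_restrict_iff' measurableSet_Ioi).mpr (ae_of_all _ hbound_ptwise))
    have h2 : (∫ x in Ioi (1:ℝ), (Real.log X)⁻¹ * (Real.log X)⁻¹ *
        (x ^ (-s) * (Real.sqrt (x^2 - 1))⁻¹ * Real.log x)) =
        (Real.log X)⁻¹ * (Real.log X)⁻¹ * C₀ := MeasureTheory.integral_const_mul _ _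
    rw [h2, Real.norm_eq_abs] at h1
    exact h1
  have hdiff : (∫ Y in Ioi X, f Y) -
      Real.sqrt Real.pi * Real.Gamma (s / 2) / (2 * Real.Gamma ((s + 1) / 2)) *
        (1 / (X ^ s * Real.log X)) = -((X ^ s)⁻¹ * R) := by
    rw [hI, hsplit]
    field_simp
    ring
  rw [show (∫ Y in Set.Ioi X, 1 / (Y ^ s * Real.log Y * Real.sqrt (Y ^ 2 - X ^ 2))) =
    ∫ Y in Ioi X, f Y from rfl, hdiff, abs_neg, abs_mul, abs_of_nonneg (by positivity : (0:ℝ) ≤ (X ^ s)⁻¹)]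
  calc (X ^ s)⁻¹ * |R| ≤ (X ^ s)⁻¹ * ((Real.log X)⁻¹ * (Real.log X)⁻¹ * C₀) :=
        mul_le_mul_of_nonneg_left hRle (by positivity)
    _ = C₀ / (X ^ s * (Real.log X) ^ 2) := by
        rw [pow_two]
        field_simp
    _ ≤ (C₀ + 1) / (X ^ s * (Real.log X) ^ 2) := by
        gcongr
        linarith
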